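/- Suppose A is derivation-simple with respect to D, and set F₁ := {w ∈ A : d(w) = 0 for all d ∈ D}. Let α : D → F be a function and let u, v ∈ A be nonzero elements with d(u) = α(d)·u and d(v) = α(d)·v for all d ∈ D. Then v ∈ F₁·u; in other words, for each such α the simultaneous eigenspace A_α^{(0)} = {w ∈ A : d(w) = α(d)·w for all d ∈ D} is a one-dimensional vector space over the field F₁. -/

import Mathlib

/- STATEMENT 7: if A is derivation-simple with respect to D and u, v are nonzero simultaneous eigenvectors for the same α, then v ∈ F₁·u, where F₁ = {w : d(w) = 0 ∀ d ∈ D}; i.e. each eigenspace A_α⁽⁰⁾ is one-dimensional over F₁. -/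

noncomputable section

/-- `A` is derivation-simple with respect to `D`: there is no `F`-subspace `I` of `A` with
`I ≠ {0}`, `I ≠ A`, `u·I ⊆ I` for all `u ∈ A`, and `d(I) ⊆ I` for all `d ∈ D`. -/
def DerivationSimple (F : Type*) [Field F] (A : Type*) [CommRing A] [Algebra F A]
    (D : Submodule F (Module.End F A)) : Prop :=
  ∀ I : Submodule F A, (∀ u : A, ∀ x ∈ I, u * x ∈ I) →
    (∀ d ∈ D, ∀ x ∈ I, d x ∈ I) → I = ⊥ ∨ I = ⊤

theorem eigenspace_one_dimensional (F : Type*) [Field F] [IsAlgClosed F] [CharZero F]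
    (A : Type*) [CommRing A] [Algebra F A] (D : Submodule F (Module.End F A))
    (hder : ∀ d ∈ D, ∀ u v : A, d (u * v) = d u * v + u * d v)
    (hds : DerivationSimple F A D)
    (α : ↥D → F) (u v : A) (hu : u ≠ 0) (hv : v ≠ 0)
    (hαu : ∀ d : ↥D, (d : Module.End F A) u = α d • u)
    (hαv : ∀ d : ↥D, (d : Module.End F A) v = α d • v) :
    ∃ c : A, (∀ d : ↥D, (d : Module.End F A) c = 0) ∧ v = c * u := by
  set I : Submodule F A := LinearMap.range (LinearMap.mulRight F u) with hI
  have hmem : ∀ x, x ∈ I ↔ ∃ a, a * u = x := by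
    intro x; simp [hI, LinearMap.mulRight_apply]
  have hImul : ∀ w : A, ∀ x ∈ I, w * x ∈ I := by
    intro w x hx
    obtain ⟨a, ha⟩ := (hmem x).1 hx
    exact (hmem _).2 ⟨w * a, by rw [mul_assoc, ha]⟩
  have hId : ∀ d ∈ D, ∀ x ∈ I, d x ∈ I := by
    intro d hd x hx
    obtain ⟨a, ha⟩ := (hmem x).1 hx
    refine (hmem _).2 ⟨d a + α ⟨d, hd⟩ • a, ?_⟩
    have := hαu ⟨d, hd⟩
    simp only [Submodule.coe_mk] at this
    rw [← ha, hder d hd a u, this, add_mul, smul_mul_assoc, mul_smul_comm]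
  have huI : u ∈ I := (hmem u).2 ⟨1, one_mul u⟩
  rcases hds I hImul hId with hbot | htop
  · exact absurd (hbot ▸ huI) (by simpa using hu)
  · obtain ⟨b, hb⟩ := (hmem 1).1 (htop ▸ Submodule.mem_top)
    obtain ⟨c, hc⟩ := (hmem v).1 (htop ▸ Submodule.mem_top)
    refine ⟨c, ?_, hc.symm⟩
    intro d
    have hdu := hαu d
    have hdv := hαv d
    have key : (d : Module.End F A) c * u = 0 := by
      have h1 : (d : Module.End F A) (c * u) = (d : Module.End F A) c * u + c * ((α d) • u) := by
        rw [hder d d.2 c u, hdu]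
      rw [hc, hdv, ← hc] at h1
      have : (α d) • (c * u) = c * ((α d) • u) := by
        rw [mul_smul_comm]
      rw [this] at h1
      exact right_eq_add.mp h1
    have := congrArg (· * b) key
    simp only [zero_mul] at this
    calc (d : Module.End F A) c = (d : Module.End F A) c * 1 := (mul_one _).symm
      _ = (d : Module.End F A) c * (b * u) := by rw [hb]
      _ = ((d : Module.End F A) c * u) * b := by ring
      _ = 0 := by rw [key, zero_mul]
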